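/- Let n = 2k ≥ 2 be even, and let π = π₂ ∘ π₁, where π₁ = (1 2)(3 4)⋯(2k−1 2k) and π₂ = (2 3)(4 5)⋯(2k−2 2k−1) are permutations of {1,…,n}. Then π is a cyclic permutation with no fixed points; equivalently, for every pair of positions i, j ∈ {1,…,n} there exists an exponent 0 ≤ m < n such that π^m(i) = j. Consequently, after applying π a total of n times to the sequence (1,…,n), each number appears at each position at least once. -/

import Mathlib

/-- For even `n = 2k ≥ 2`, with (0-indexed) `π₁ = (0 1)(2 3)⋯(2k-2 2k-1)` and
`π₂ = (1 2)(3 4)⋯(2k-3 2k-2)` fixing `0` and `2k-1` (these are the 1-indexed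
`(1 2)(3 4)⋯(2k-1 2k)` and `(2 3)(4 5)⋯(2k-2 2k-1)` of the paper), the composition
`π = π₂ ∘ π₁` is a cyclic permutation with no fixed points: for every pair of
positions `i, j` there is an exponent `m < n` with `π^m i = j`. -/
theorem stmt_4 (k : ℕ) (hk : 1 ≤ k)
    (π₁ π₂ : Equiv.Perm (Fin (2 * k)))
    (h1 : ∀ i : Fin (2 * k), ((π₁ i : ℕ)) =
      if i.val % 2 = 0 then i.val + 1 else i.val - 1)
    (h2 : ∀ i : Fin (2 * k), ((π₂ i : ℕ)) =
      if i.val = 0 ∨ i.val = 2 * k - 1 then i.val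
      else (if i.val % 2 = 1 then i.val + 1 else i.val - 1)) :
    (π₂ * π₁).IsCycle ∧ (∀ i, (π₂ * π₁) i ≠ i) ∧
      ∀ i j : Fin (2 * k), ∃ m, m < 2 * k ∧ ((π₂ * π₁) ^ m) i = j := by
  set π := π₂ * π₁ with hπ
  have hn : 0 < 2 * k := by omega
  have step : ∀ x : Fin (2 * k), ((π x : ℕ)) =
      if x.val % 2 = 0 then (if x.val = 2 * k - 2 then 2 * k - 1 else x.val + 2)
      else (if x.val = 1 then 0 else x.val - 2) := by
    intro x
    have hx := x.isLt
    have hπx : π x = π₂ (π₁ x) := rfl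
    have hlt := (π₁ x).isLt
    have hv := h1 x
    rw [hπx, h2]
    split_ifs at hv ⊢ <;> omega
  set o : Fin (2 * k) := ⟨0, hn⟩ with ho
  have pow0 : ∀ m, m ≤ 2 * k → (((π ^ m) o : ℕ)) =
      if m < k then 2 * m else if m < 2 * k then 4 * k - 1 - 2 * m else 0 := by
    intro m
    induction m with
    | zero =>
      intro _
      simp only [pow_zero, Equiv.Perm.one_apply]
      have ho0 : (o : ℕ) = 0 := rfl
      rw [ho0]
      split_ifs <;> omega
    | succ m ih =>
      intro hm
      have ihv := ih (by omega)
      have hstep : (π ^ (m + 1)) o = π ((π ^ m) o) := by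
        rw [pow_succ', Equiv.Perm.mul_apply]
      rw [hstep, step, ihv]
      split_ifs <;> omega
  have fix0 : (π ^ (2 * k)) o = o := by
    apply Fin.ext
    rw [pow0 _ le_rfl]
    have ho0 : (o : ℕ) = 0 := rfl
    rw [ho0]
    split_ifs <;> omega
  have surj : ∀ i : Fin (2 * k), ∃ a, a < 2 * k ∧ (π ^ a) o = i := by
    intro i
    have hi := i.isLt
    by_cases hp : i.val % 2 = 0
    · refine ⟨i.val / 2, by omega, Fin.ext ?_⟩
      rw [pow0 _ (by omega)]
      split_ifs <;> omega
    · refine ⟨(4 * k - 1 - i.val) / 2, by omega, Fin.ext ?_⟩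
      rw [pow0 _ (by omega)]
      split_ifs <;> omega
  have nofix : ∀ x : Fin (2 * k), π x ≠ x := by
    intro x h
    have hs := step x
    rw [h] at hs
    have hx := x.isLt
    split_ifs at hs <;> omega
  refine ⟨⟨o, nofix o, ?_⟩, nofix, ?_⟩
  · intro y _
    obtain ⟨m, _, hm⟩ := surj y
    exact ⟨(m : ℤ), by rw [zpow_natCast]; exact hm⟩
  · intro i j
    obtain ⟨a, ha, rfl⟩ := surj i
    obtain ⟨b, hb, rfl⟩ := surj j
    refine ⟨if a ≤ b then b - a else b + 2 * k - a, ?_, ?_⟩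
    · split_ifs <;> omega
    · split_ifs with hab
      · rw [← Equiv.Perm.mul_apply, ← pow_add,
          show b - a + a = b by omega]
      · rw [← Equiv.Perm.mul_apply, ← pow_add,
          show b + 2 * k - a + a = b + 2 * k by omega, pow_add,
          Equiv.Perm.mul_apply, fix0]
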